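/- Let S and A be finite nonempty sets, d a probability vector on S with d(s) > 0 for all s, π(·|s) a probability vector on A with π(a|s) > 0 for all (s,a), and ρ(s,a) = d(s)·π(a|s). Let r : S×A → ℝ and α > 0, ε > 0. Define the adversarial reward r̃*(s,a) = r(s,a) − α·log(d(s))/(|A|·π(a|s)) − ε − α·log|S|. Then r̃* satisfies the constraint α·LSE_S((r^π − (r̃*)^π)/α) = ε + α·log|S| (where r^π(s) = Σ_a π(a|s)·r(s,a)), and it attains the robust value: Σ_{s,a} ρ(s,a)·r̃*(s,a) = Σ_{s,a} ρ(s,a)·r(s,a) + α·(H(d) − log|S|) − ε. -/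

import Mathlib

open Real Finset

/-- **The adversarial reward for state-entropy regularization.**
`r̃*(s,a) = r(s,a) − α·log(d s)/(|A|·π(a|s)) − ε − α·log |S|` saturates the LSE
constraint and attains the robust value
`∑ ρ r + α (H(d) − log |S|) − ε`. -/
theorem stmt_2 {S A : Type*} [Fintype S] [Nonempty S] [Fintype A] [Nonempty A]
    (d : S → ℝ) (pol : S → A → ℝ)
    (hd0 : ∀ s, 0 < d s) (hd1 : ∑ s, d s = 1)
    (hpol0 : ∀ s a, 0 < pol s a) (hpol1 : ∀ s, ∑ a, pol s a = 1)
    (r : S → A → ℝ) (α ε : ℝ) (hα : 0 < α) (hε : 0 < ε)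
    (rt : S → A → ℝ)
    (hrt : ∀ s a, rt s a =
      r s a - α * Real.log (d s) / ((Fintype.card A : ℝ) * pol s a)
        - ε - α * Real.log (Fintype.card S)) :
    α * Real.log (∑ s, Real.exp
        (((∑ a, pol s a * r s a) - (∑ a, pol s a * rt s a)) / α))
      = ε + α * Real.log (Fintype.card S) ∧
    ∑ s, ∑ a, (d s * pol s a) * rt s a =
      (∑ s, ∑ a, (d s * pol s a) * r s a)
        + α * ((-∑ s, d s * Real.log (d s)) - Real.log (Fintype.card S)) - ε := by
  have hA : (0:ℝ) < (Fintype.card A : ℝ) := by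
    exact_mod_cast Fintype.card_pos
  have hS : (0:ℝ) < (Fintype.card S : ℝ) := by
    exact_mod_cast Fintype.card_pos
  -- key per-action sum
  have hsum : ∀ s, ∑ a, pol s a * (α * Real.log (d s) / ((Fintype.card A : ℝ) * pol s a))
      = α * Real.log (d s) := by
    intro s
    have h1 : ∀ a ∈ (univ : Finset A),
        pol s a * (α * Real.log (d s) / ((Fintype.card A : ℝ) * pol s a))
          = α * Real.log (d s) / (Fintype.card A : ℝ) := by
      intro a _
      have h := (hpol0 s a).ne'
      field_simp
    rw [Finset.sum_congr rfl h1, Finset.sum_const, nsmul_eq_mul]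
    field_simp
    rw [Finset.card_univ]
    ring
  have key : ∀ s, (∑ a, pol s a * rt s a)
      = (∑ a, pol s a * r s a) - α * Real.log (d s)
        - (ε + α * Real.log (Fintype.card S)) := by
    intro s
    have h1 : ∀ a ∈ (univ : Finset A), pol s a * rt s a
        = pol s a * r s a
          - pol s a * (α * Real.log (d s) / ((Fintype.card A : ℝ) * pol s a))
          - pol s a * (ε + α * Real.log (Fintype.card S)) := by
      intro a _; rw [hrt]; ring
    rw [Finset.sum_congr rfl h1, Finset.sum_sub_distrib, Finset.sum_sub_distrib,
      hsum, ← Finset.sum_mul, hpol1, one_mul]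
  constructor
  · have hexp : ∀ s, Real.exp
        (((∑ a, pol s a * r s a) - (∑ a, pol s a * rt s a)) / α)
        = d s * (Real.exp (ε / α) * (Fintype.card S : ℝ)) := by
      intro s
      rw [key]
      have : ((∑ a, pol s a * r s a) -
          ((∑ a, pol s a * r s a) - α * Real.log (d s)
            - (ε + α * Real.log (Fintype.card S)))) / α
          = Real.log (d s) + (ε / α + Real.log (Fintype.card S)) := by
        field_simp
        ring
      rw [this, Real.exp_add, Real.exp_add, Real.exp_log (hd0 s), Real.exp_log hS]
    rw [Finset.sum_congr rfl (fun s _ => hexp s), ← Finset.sum_mul, hd1, one_mul,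
      Real.log_mul (Real.exp_ne_zero _) hS.ne', Real.log_exp]
    field_simp
  · have h1 : ∀ s ∈ (univ : Finset S), ∑ a, (d s * pol s a) * rt s a
        = (∑ a, (d s * pol s a) * r s a)
          - α * (d s * Real.log (d s))
          - d s * (ε + α * Real.log (Fintype.card S)) := by
      intro s _
      have h2 : ∀ a ∈ (univ : Finset A), (d s * pol s a) * rt s a
          = d s * (pol s a * rt s a) := fun a _ => by ring
      have h3 : ∀ a ∈ (univ : Finset A), (d s * pol s a) * r s a
          = d s * (pol s a * r s a) := fun a _ => by ring
      rw [Finset.sum_congr rfl h2, Finset.sum_congr rfl h3,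
        ← Finset.mul_sum, ← Finset.mul_sum, key]
      ring
    rw [Finset.sum_congr rfl h1, Finset.sum_sub_distrib, Finset.sum_sub_distrib,
      ← Finset.mul_sum, ← Finset.sum_mul, hd1, one_mul]
    ring
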